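/- Let p be a prime not dividing N, and λ an integer with 1 ≤ λ ≤ p. If μ is an integer with Nμ ≡ 1 (mod p), then there exists V ∈ Γ_0(pN) and an Atkin–Lehner matrix W_p = [[ap, b],[cpN, dp]] with integer entries and determinant p, such that [[1, λ],[N, Nλ+1]] = V · W_p · [[1/p, (λ+μ)/p],[0, 1]]. -/
import Mathlib


open Matrix CongruenceSubgroup
open scoped MatrixGroups

/-- Let `p ∤ N` be prime, `1 ≤ λ ≤ p`, and `μ` with `Nμ ≡ 1 (mod p)`.  Then there exist
`V ∈ Γ₀(pN)` and an Atkin–Lehner matrix `W_p = [[ap, b],[cpN, dp]]` of determinant `p`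
such that `[[1, λ],[N, Nλ+1]] = V · W_p · [[1/p, (λ+μ)/p],[0, 1]]` over `ℚ`. -/
theorem coset_rep_atkin_lehner_decomposition (p N : ℕ) (hp : p.Prime) (hpN : ¬ p ∣ N)
    (hN : 0 < N) (lam : ℤ) (hlam : 1 ≤ lam ∧ lam ≤ p) (μ : ℤ)
    (hμ : (N : ℤ) * μ ≡ 1 [ZMOD p]) :
    ∃ V : SL(2, ℤ), V ∈ Gamma0 (p * N) ∧
      ∃ a b c d : ℤ,
        (a * p) * (d * p) - b * (c * p * N) = p ∧
        (!![(1 : ℚ), (lam : ℚ); (N : ℚ), (N : ℚ) * lam + 1]) =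
          ((V : Matrix (Fin 2) (Fin 2) ℤ).map (Int.cast : ℤ → ℚ)) *
            (!![(a : ℚ) * p, (b : ℚ); (c : ℚ) * p * N, (d : ℚ) * p]) *
            !![1 / (p : ℚ), ((lam : ℚ) + μ) / p; 0, 1] := by
  have hp0 : (p : ℚ) ≠ 0 := Nat.cast_ne_zero.mpr hp.pos.ne'
  have hdvd : (p : ℤ) ∣ (N : ℤ) * μ - 1 := Int.ModEq.dvd hμ.symm
  refine ⟨1, Subgroup.one_mem _, 1, -μ, 1, -(((N : ℤ) * μ - 1) / p), ?_, ?_⟩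
  · have h := Int.ediv_mul_cancel hdvd
    push_cast
    nlinarith [h]
  · have h : ((((N : ℤ) * μ - 1) / p : ℤ) : ℚ) * p = (N : ℚ) * μ - 1 := by
      have := Int.ediv_mul_cancel hdvd
      have : ((((N : ℤ) * μ - 1) / p * p : ℤ) : ℚ) = (((N : ℤ) * μ - 1 : ℤ) : ℚ) := by
        exact_mod_cast congrArg (Int.cast : ℤ → ℚ) this
      push_cast at this
      linarith [this]
    ext i j
    fin_cases i <;> fin_cases j <;>
      simp [Matrix.mul_apply, Fin.sum_univ_two, Matrix.SpecialLinearGroup.coe_one] <;>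
      push_cast <;> field_simp <;> nlinarith [h]
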